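/- For every nonnegative integer n, \sum_{l,m\ge 0} \mathscr{B}_m^{(-l)}(n) x^l y^m = \sum_{j\ge 0} j! (j+n)! Q_j(x) Q_j(y) as formal power series, where Q_j(X) = X^j / ((1-X)(1-2X)\cdots(1-(j+1)X)) and \mathscr{B}_m^{(-l)}(n) = \sum_{j=0}^{n} [n choose_1 j] B_m^{(-l-j)}(n). -/

import Mathlib

open PowerSeries Finset

/-- Unsigned Stirling numbers of the first kind. -/
def stirling1 : ℕ → ℕ → ℕ
  | 0, 0 => 1
  | 0, _ + 1 => 0
  | _ + 1, 0 => 0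
  | n + 1, m + 1 => stirling1 n m + n * stirling1 n (m + 1)

/-- Stirling numbers of the second kind. -/
def stirling2 : ℕ → ℕ → ℕ
  | 0, 0 => 1
  | 0, _ + 1 => 0
  | _ + 1, 0 => 0
  | n + 1, m + 1 => stirling2 n m + (m + 1) * stirling2 n (m + 1)

/-- e^t as a formal power series over ℚ. -/
noncomputable def expQ : PowerSeries ℚ := PowerSeries.exp ℚ

/-- e^{-t} as a formal power series over ℚ. -/
noncomputable def expNegQ : PowerSeries ℚ := rescale (-1) expQ

/-- The formal power series Li_k(1-e^{-t})/(1-e^{-t}) = ∑_{m≥0} (m+1)^{-k} (1-e^{-t})^m,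
  defined coefficientwise (the tail vanishes since (1-e^{-t})^m has order m). -/
noncomputable def liEGF (k : ℤ) : PowerSeries ℚ :=
  PowerSeries.mk fun j =>
    ∑ m ∈ range (j + 1), ((m : ℚ) + 1) ^ (-k) * coeff j ((1 - expNegQ) ^ m)

/-- EGF of the poly-Bernoulli polynomials: e^{-xt} Li_k(1-e^{-t})/(1-e^{-t}). -/
noncomputable def pbEGF (k : ℤ) (x : ℚ) : PowerSeries ℚ := rescale (-x) expQ * liEGF k

/-- Poly-Bernoulli polynomial value B_m^{(k)}(x). -/
noncomputable def pbPoly (k : ℤ) (x : ℚ) (m : ℕ) : ℚ := m.factorial * coeff m (pbEGF k x)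

/-- Poly-Bernoulli number B_m^{(k)}. -/
noncomputable def pbB (k : ℤ) (m : ℕ) : ℚ := pbPoly k 0 m

/-- Poly-Bernoulli number C_m^{(k)}. -/
noncomputable def pbC (k : ℤ) (m : ℕ) : ℚ := pbPoly k 1 m

/-- 𝓑_m^{(-l)}(n) = ∑_{j=0}^n [n j] B_m^{(-l-j)}(n). -/
noncomputable def scrB (l m n : ℕ) : ℚ :=
  ∑ j ∈ range (n + 1), (stirling1 n j : ℚ) * pbPoly (-(l : ℤ) - j) n m

/-- Q_j(X) = X^j/((1-X)(1-2X)⋯(1-(j+1)X)) as a formal power series. -/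
noncomputable def Qser (j : ℕ) : PowerSeries ℚ :=
  X ^ j * ∏ ν ∈ range (j + 1), Ring.inverse (1 - (((ν : ℚ) + 1)) • X)

lemma stirling2_zero_succ (k : ℕ) : stirling2 0 (k+1) = 0 := rfl
lemma stirling2_succ_zero (n : ℕ) : stirling2 (n+1) 0 = 0 := rfl
lemma stirling2_succ_succ (n k : ℕ) :
    stirling2 (n+1) (k+1) = stirling2 n k + (k+1) * stirling2 n (k+1) := rfl

lemma stirling2_eq_zero : ∀ n k : ℕ, n < k → stirling2 n k = 0 := by
  intro n
  induction n with
  | zero => intro k h; cases k with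
    | zero => omega
    | succ k => rfl
  | succ n ih =>
    intro k h
    cases k with
    | zero => omega
    | succ k =>
      rw [stirling2_succ_succ, ih k (by omega), ih (k+1) (by omega)]; ring

lemma stirling2_one (m : ℕ) : stirling2 (m+1) 1 = 1 := by
  induction m with
  | zero => rfl
  | succ m ih => rw [stirling2_succ_succ, ih]; rfl

/-- Identity I -/
lemma sum_choose_stirling2 : ∀ d p : ℕ,
    ∑ a ∈ range (d+1), d.choose a * stirling2 a p = stirling2 (d+1) (p+1) := by
  intro d
  induction d with
  | zero =>
    intro p
    cases p with
    | zero => rfl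
    | succ p =>
      simp [stirling2_zero_succ, stirling2_succ_succ,
        stirling2_eq_zero 0 (p+1) (by omega)]
  | succ d ih =>
    intro p
    rw [Finset.sum_range_succ' (fun a => (d+1).choose a * stirling2 a p)]
    have h1 : ∀ a, (d+1).choose (a+1) * stirling2 (a+1) p
        = d.choose a * stirling2 (a+1) p + d.choose (a+1) * stirling2 (a+1) p := by
      intro a; rw [Nat.choose_succ_succ, add_mul]
    simp only [h1, Finset.sum_add_distrib]
    have h2 : (∑ a ∈ range (d+1), d.choose (a+1) * stirling2 (a+1) p)
        + (d+1).choose 0 * stirling2 0 p = stirling2 (d+1) (p+1) := by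
      rw [Nat.choose_zero_right, one_mul]
      have h4 : ∑ a ∈ range (d+1), d.choose (a+1) * stirling2 (a+1) p + stirling2 0 p
          = ∑ a ∈ range (d+2), d.choose a * stirling2 a p := by
        rw [Finset.sum_range_succ' (fun a => d.choose a * stirling2 a p) (d+1)]
        simp
      rw [h4, Finset.sum_range_succ, Nat.choose_succ_self, zero_mul, add_zero, ih p]
    rw [add_assoc, h2]
    cases p with
    | zero =>
      have hz : ∀ a ∈ range (d+1), d.choose a * stirling2 (a+1) 0 = 0 := by
        intro a _; rw [stirling2_succ_zero, mul_zero]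
      rw [Finset.sum_congr rfl hz]
      simp [stirling2_succ_succ, stirling2_succ_zero]
    | succ p =>
      have hs : ∀ a ∈ range (d+1), d.choose a * stirling2 (a+1) (p+1)
          = d.choose a * stirling2 a p + (p+1) * (d.choose a * stirling2 a (p+1)) := by
        intro a _; rw [stirling2_succ_succ]; ring
      rw [Finset.sum_congr rfl hs, Finset.sum_add_distrib, ← Finset.mul_sum, ih p, ih (p+1)]
      rw [stirling2_succ_succ (d+1) (p+1)]
      ring

lemma stirling2_zero_zero : stirling2 0 0 = 1 := rfl
lemma stirling2_one_one : stirling2 1 1 = 1 := rfl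
/-- (G): alternating sum formula for stirling2. -/
lemma alt_sum_stirling2 : ∀ p j : ℕ,
    ∑ r ∈ range (p+1), (-1:ℚ)^(p+r) * (p.choose r) * (r:ℚ)^j
      = (p.factorial : ℚ) * stirling2 j p := by
  intro p
  induction p with
  | zero =>
    intro j
    cases j with
    | zero => simp [stirling2_zero_zero]
    | succ j => simp [stirling2_succ_zero]
  | succ p ih =>
    intro j
    rw [Finset.sum_range_succ' (fun r => (-1:ℚ)^(p+1+r) * ((p+1).choose r) * (r:ℚ)^j)]
    have key : ∀ s : ℕ, (-1:ℚ)^(p+1+(s+1)) * ((p+1).choose (s+1)) * ((s+1:ℕ):ℚ)^j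
        = (-1:ℚ)^(p+s) * (p.choose s) * ((s:ℚ)+1)^j
          + (-1:ℚ)^(p+s) * (p.choose (s+1)) * ((s:ℚ)+1)^j := by
      intro s
      rw [Nat.choose_succ_succ]
      push_cast
      have : (-1:ℚ)^(p+1+(s+1)) = (-1:ℚ)^(p+s) := by
        rw [show p+1+(s+1) = (p+s)+2 by ring, pow_add]
        norm_num
      rw [this]; ring
    simp only [key, Finset.sum_add_distrib]
    -- second piece plus the r = 0 term form minus (ih j)
    have h2 : (∑ s ∈ range (p+1), (-1:ℚ)^(p+s) * (p.choose (s+1)) * ((s:ℚ)+1)^j)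
        + (-1:ℚ)^(p+1+0) * (((p+1).choose 0 : ℕ) : ℚ) * ((0:ℕ):ℚ)^j
        = - ((p.factorial : ℚ) * stirling2 j p) := by
      rw [← ih j]
      rw [Finset.sum_range_succ' (fun r => (-1:ℚ)^(p+r) * (p.choose r) * (r:ℚ)^j)]
      rw [Finset.sum_range_succ (fun s => (-1:ℚ)^(p+s) * (p.choose (s+1)) * ((s:ℚ)+1)^j)]
      rw [Nat.choose_succ_self]
      rw [neg_add]
      have e1 : ∑ s ∈ range p, (-1:ℚ)^(p+s) * (p.choose (s+1)) * ((s:ℚ)+1)^j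
          = -∑ k ∈ range p, (-1:ℚ)^(p+(k+1)) * (p.choose (k+1)) * ((k+1:ℕ):ℚ)^j := by
        rw [← Finset.sum_neg_distrib]
        apply Finset.sum_congr rfl
        intro s _
        have hs : (-1:ℚ)^(p+(s+1)) = -(-1:ℚ)^(p+s) := by
          rw [show p+(s+1) = (p+s)+1 by ring, pow_succ]; ring
        rw [hs]; push_cast; ring
      have e2 : (-1:ℚ)^(p+1+0) * (((p+1).choose 0 : ℕ) : ℚ) * ((0:ℕ):ℚ)^j
          = -((-1:ℚ)^(p+0) * ((p.choose 0 : ℕ) : ℚ) * ((0:ℕ):ℚ)^j) := by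
        have hs : (-1:ℚ)^(p+1+0) = -(-1:ℚ)^(p+0) := by
          rw [show p+1+0 = (p+0)+1 by ring, pow_succ]; ring
        rw [hs]; simp
      rw [e1, e2]
      push_cast
      ring
    -- first piece
    have h1 : (∑ s ∈ range (p+1), (-1:ℚ)^(p+s) * (p.choose s) * ((s:ℚ)+1)^j)
        = (p.factorial : ℚ) * stirling2 (j+1) (p+1) := by
      have expand : ∀ s ∈ range (p+1), (-1:ℚ)^(p+s) * (p.choose s) * ((s:ℚ)+1)^j
          = ∑ e ∈ range (j+1), (j.choose e : ℚ) * ((-1:ℚ)^(p+s) * (p.choose s) * (s:ℚ)^e) := by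
        intro s _
        rw [add_pow (s:ℚ) 1 j, Finset.mul_sum]
        apply Finset.sum_congr rfl
        intro e _
        rw [one_pow]; ring
      rw [Finset.sum_congr rfl expand, Finset.sum_comm]
      have inner : ∀ e ∈ range (j+1), ∑ s ∈ range (p+1),
          (j.choose e : ℚ) * ((-1:ℚ)^(p+s) * (p.choose s) * (s:ℚ)^e)
          = (j.choose e : ℚ) * ((p.factorial : ℚ) * stirling2 e p) := by
        intro e _
        rw [← Finset.mul_sum, ih e]
      rw [Finset.sum_congr rfl inner, ← sum_choose_stirling2 j p]
      push_cast [Finset.mul_sum]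
      apply Finset.sum_congr rfl
      intro e _; ring
    rw [add_assoc, h2, h1, stirling2_succ_succ j p]
    push_cast [Nat.factorial_succ]
    ring
lemma stirling1_succ_zero (n : ℕ) : stirling1 (n+1) 0 = 0 := rfl
lemma stirling1_succ_succ (n k : ℕ) :
    stirling1 (n+1) (k+1) = stirling1 n k + n * stirling1 n (k+1) := rfl

lemma stirling1_eq_zero : ∀ n k : ℕ, n < k → stirling1 n k = 0 := by
  intro n
  induction n with
  | zero => intro k h; cases k with
    | zero => omega
    | succ k => rfl
  | succ n ih =>
    intro k h
    cases k with
    | zero => omega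
    | succ k =>
      rw [stirling1_succ_succ, ih k (by omega), ih (k+1) (by omega)]; ring

/-- OGF of stirling1 row: ∑ⱼ [n j] y^j = y (y+1) ⋯ (y+n-1). -/
lemma stirling1_sum_pow (y : ℕ) : ∀ n : ℕ,
    ∑ j ∈ range (n+1), stirling1 n j * y^j = y.ascFactorial n := by
  intro n
  induction n with
  | zero => simp [stirling1]
  | succ n ih =>
    rw [Finset.sum_range_succ' (fun j => stirling1 (n+1) j * y^j)]
    rw [stirling1_succ_zero]
    simp only [stirling1_succ_succ, add_mul, Finset.sum_add_distrib]
    have h1 : ∑ j ∈ range (n+1), stirling1 n j * y^(j+1)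
        = y * y.ascFactorial n := by
      rw [← ih, Finset.mul_sum]
      apply Finset.sum_congr rfl
      intro j _; ring
    have h2 : ∑ j ∈ range (n+1), n * stirling1 n (j+1) * y^(j+1)
        = n * y.ascFactorial n := by
      rw [← ih, Finset.mul_sum]
      cases n with
      | zero => simp
      | succ n =>
        rw [Finset.sum_range_succ (fun j => (n+1) * stirling1 (n+1) (j+1) * y^(j+1))]
        rw [stirling1_eq_zero (n+1) (n+2) (by omega)]
        rw [Finset.sum_range_succ' (fun j => (n+1) * (stirling1 (n+1) j * y^j))]
        rw [stirling1_succ_zero]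
        simp [mul_assoc]
    have h3 : ∀ j ∈ range (n+1), stirling1 n j * y^(j+1) + n * stirling1 n (j+1) * y^(j+1)
        = stirling1 n j * y^(j+1) + n * stirling1 n (j+1) * y^(j+1) := fun _ _ => rfl
    rw [h1, h2, Nat.ascFactorial_succ]
    ring

lemma descFactorial_succ_eq (p q : ℕ) :
    (p+1) * p.descFactorial q = p.descFactorial (q+1) + (q+1) * p.descFactorial q := by
  rcases le_or_gt q p with h | h
  · rw [Nat.descFactorial_succ, ← add_mul]
    congr 1
    omega
  · rw [Nat.descFactorial_eq_zero_iff_lt.2 h, Nat.descFactorial_eq_zero_iff_lt.2 (by omega)]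
    ring

/-- (F): (p+1)^l = ∑_q S2(l+1,q+1) p^[q]. -/
lemma pow_eq_sum_stirling2_descFactorial : ∀ l p : ℕ,
    (p+1)^l = ∑ q ∈ range (l+1), stirling2 (l+1) (q+1) * p.descFactorial q := by
  intro l
  induction l with
  | zero => intro p; simp [stirling2_one_one]
  | succ l ih =>
    intro p
    have : (p+1)^(l+1) = (p+1) * ∑ q ∈ range (l+1), stirling2 (l+1) (q+1) * p.descFactorial q := by
      rw [← ih p, pow_succ]; ring
    rw [this, Finset.mul_sum]
    have step : ∀ q ∈ range (l+1), (p+1) * (stirling2 (l+1) (q+1) * p.descFactorial q)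
        = stirling2 (l+1) (q+1) * p.descFactorial (q+1)
          + (q+1) * stirling2 (l+1) (q+1) * p.descFactorial q := by
      intro q _
      rw [mul_left_comm, descFactorial_succ_eq]
      ring
    rw [Finset.sum_congr rfl step, Finset.sum_add_distrib]
    have hA : ∑ q ∈ range (l+2), (stirling2 (l+1) q) * p.descFactorial q
        = ∑ q ∈ range (l+1), stirling2 (l+1) (q+1) * p.descFactorial (q+1) := by
      rw [Finset.sum_range_succ' (fun q => stirling2 (l+1) q * p.descFactorial q)]
      rw [stirling2_succ_zero]
      simp
    have hB : ∑ q ∈ range (l+2), (q+1) * stirling2 (l+1) (q+1) * p.descFactorial q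
        = ∑ q ∈ range (l+1), (q+1) * stirling2 (l+1) (q+1) * p.descFactorial q := by
      rw [Finset.sum_range_succ (fun q => (q+1) * stirling2 (l+1) (q+1) * p.descFactorial q)]
      rw [stirling2_eq_zero (l+1) (l+2) (by omega)]
      ring
    rw [← hA, ← hB, ← Finset.sum_add_distrib]
    apply Finset.sum_congr rfl
    intro q _
    rw [stirling2_succ_succ (l+1) q]
    ring

/-- (V): (m+1)-st difference of a degree-m polynomial vanishes. -/
lemma alt_sum_choose_pow_eq_zero (m : ℕ) (x : ℚ) :
    ∑ r ∈ range (m+2), (-1:ℚ)^r * ((m+1).choose r) * (x + r)^m = 0 := by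
  have expand : ∀ r ∈ range (m+2), (-1:ℚ)^r * ((m+1).choose r) * (x + r)^m
      = ∑ d ∈ range (m+1), (-1:ℚ)^r * ((m+1).choose r) * ((r:ℚ)^d * x^(m-d) * (m.choose d)) := by
    intro r _
    rw [add_comm x (r:ℚ), add_pow (r:ℚ) x m, Finset.mul_sum]
  rw [Finset.sum_congr rfl expand, Finset.sum_comm]
  apply Finset.sum_eq_zero
  intro d hd
  have hz : (stirling2 d (m+1) : ℚ) = 0 := by
    rw [stirling2_eq_zero d (m+1) (by simpa using hd)]; simp
  have key := alt_sum_stirling2 (m+1) d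
  rw [hz, mul_zero] at key
  have : ∑ r ∈ range (m+2), (-1:ℚ)^r * ((m+1).choose r) * ((r:ℚ)^d * x^(m-d) * (m.choose d))
      = (x^(m-d) * (m.choose d) * (-1:ℚ)^(m+1)) *
        ∑ r ∈ range (m+2), (-1:ℚ)^((m+1)+r) * ((m+1).choose r) * (r:ℚ)^d := by
    rw [Finset.mul_sum]
    apply Finset.sum_congr rfl
    intro r _
    rw [pow_add]
    ring_nf
    rw [show m*2 = 2*m by ring, pow_mul]
    norm_num
  rw [this, key, mul_zero]
/-- The key identity, proven by induction on m. -/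
lemma Lkey : ∀ m n q : ℕ,
    ∑ p ∈ range (m+1), ((p+n).factorial : ℚ) / p.factorial * p.descFactorial q *
      ∑ r ∈ range (p+1), (-1:ℚ)^r * (p.choose r) * ((n:ℚ) + r)^m
    = (-1:ℚ)^m * q.factorial * (q+n).factorial * stirling2 (m+1) (q+1) := by
  intro m
  induction m with
  | zero =>
    intro n q
    cases q with
    | zero => simp [stirling2_one_one]
    | succ q =>
      simp [stirling2_succ_succ 0 (q+1), stirling2_zero_succ]
  | succ m ih =>
    intro n q
    -- Step A: pointwise recurrence for the inner sum
    have stepA : ∀ p : ℕ, (∑ r ∈ range (p+1), (-1:ℚ)^r * (p.choose r) * ((n:ℚ) + r)^(m+1))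
        = (n:ℚ) * (∑ r ∈ range (p+1), (-1:ℚ)^r * (p.choose r) * ((n:ℚ) + r)^m)
          - (p:ℚ) * ∑ s ∈ range p, (-1:ℚ)^s * ((p-1).choose s) * (((n:ℚ)+1) + s)^m := by
      intro p
      cases p with
      | zero => simp [pow_succ]; ring
      | succ p' =>
        have e1 : ∀ r ∈ range (p'+2), (-1:ℚ)^r * ((p'+1).choose r) * ((n:ℚ) + r)^(m+1)
            = (n:ℚ) * ((-1:ℚ)^r * ((p'+1).choose r) * ((n:ℚ) + r)^m)
              + (r:ℚ) * ((-1:ℚ)^r * ((p'+1).choose r) * ((n:ℚ) + r)^m) := by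
          intro r _
          rw [pow_succ]
          ring
        have e2 : ∑ r ∈ range (p'+2), (r:ℚ) * ((-1:ℚ)^r * ((p'+1).choose r) * ((n:ℚ) + r)^m)
            = -(((p'+1:ℕ):ℚ) * ∑ s ∈ range (p'+1), (-1:ℚ)^s * (p'.choose s) * (((n:ℚ)+1) + s)^m) := by
          rw [Finset.sum_range_succ'
            (fun r => (r:ℚ) * ((-1:ℚ)^r * ((p'+1).choose r) * ((n:ℚ) + r)^m))]
          simp only [Nat.cast_zero, zero_mul, add_zero]
          rw [Finset.mul_sum, ← Finset.sum_neg_distrib]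
          apply Finset.sum_congr rfl
          intro s _
          have hch : ((s:ℚ)+1) * ((p'+1).choose (s+1)) = ((p'+1):ℚ) * (p'.choose s) := by
            have h0 : ((p'+1) * p'.choose s : ℕ) = ((p'+1).choose (s+1) * (s+1) : ℕ) :=
              Nat.add_one_mul_choose_eq p' s
            calc ((s:ℚ)+1) * ((p'+1).choose (s+1))
                = (((p'+1).choose (s+1) * (s+1) : ℕ) : ℚ) := by push_cast; ring
              _ = (((p'+1) * p'.choose s : ℕ) : ℚ) := by rw [← h0]
              _ = ((p'+1):ℚ) * (p'.choose s) := by push_cast; ring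
          have hsign : (-1:ℚ)^(s+1) = -(-1:ℚ)^s := by rw [pow_succ]; ring
          push_cast
          push_cast at hch
          rw [hsign]
          calc ((s:ℚ)+1) * (-(-1:ℚ)^s * ((p'+1).choose (s+1)) * ((n:ℚ) + ((s:ℚ)+1))^m)
              = -((-1:ℚ)^s * (((s:ℚ)+1) * ((p'+1).choose (s+1))) * (((n:ℚ)+1) + s)^m) := by
                rw [show (n:ℚ) + ((s:ℚ)+1) = ((n:ℚ)+1) + s by ring]; ring
            _ = -(((p':ℚ)+1) * ((-1:ℚ)^s * (p'.choose s) * (((n:ℚ)+1) + s)^m)) := by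
                rw [hch]; ring
        rw [Finset.sum_congr rfl e1, Finset.sum_add_distrib, ← Finset.mul_sum, e2]
        have hp : (p'+1) - 1 = p' := rfl
        rw [hp]
        push_cast
        ring
    -- rewrite the whole sum using stepA
    rw [Finset.sum_congr rfl (fun p _ => by rw [stepA p])]
    simp only [mul_sub, Finset.sum_sub_distrib]
    have hS1 : ∑ p ∈ range (m+1+1), ((p+n).factorial:ℚ)/p.factorial * p.descFactorial q *
          ((n:ℚ) * ∑ r ∈ range (p+1), (-1:ℚ)^r * (p.choose r) * ((n:ℚ)+r)^m)
        = (n:ℚ) * ((-1:ℚ)^m * q.factorial * (q+n).factorial * stirling2 (m+1) (q+1)) := by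
      rw [Finset.sum_range_succ]
      have hz : ∑ r ∈ range (m+1+1), (-1:ℚ)^r * ((m+1).choose r) * ((n:ℚ)+r)^m = 0 :=
        alt_sum_choose_pow_eq_zero m (n:ℚ)
      rw [hz, mul_zero, mul_zero, add_zero, ← ih n q, Finset.mul_sum]
      apply Finset.sum_congr rfl
      intro p _
      ring
    have hS2 : ∑ p ∈ range (m+1+1), ((p+n).factorial:ℚ)/p.factorial * p.descFactorial q *
          ((p:ℚ) * ∑ s ∈ range p, (-1:ℚ)^s * ((p-1).choose s) * (((n:ℚ)+1)+s)^m)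
        = ∑ s ∈ range (m+1), ((s+(n+1)).factorial:ℚ)/s.factorial * ((s+1).descFactorial q) *
            ∑ r ∈ range (s+1), (-1:ℚ)^r * (s.choose r) * (((n:ℚ)+1)+r)^m := by
      rw [Finset.sum_range_succ' (fun p => ((p+n).factorial:ℚ)/p.factorial * p.descFactorial q *
          ((p:ℚ) * ∑ s ∈ range p, (-1:ℚ)^s * ((p-1).choose s) * (((n:ℚ)+1)+s)^m))]
      simp only [Nat.cast_zero, zero_mul, mul_zero, add_zero, range_zero, Finset.sum_empty]
      apply Finset.sum_congr rfl
      intro s _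
      have h1 : (s+1) - 1 = s := rfl
      rw [h1, ← mul_assoc]
      have hfac : ((s+1+n).factorial:ℚ)/((s+1).factorial) * ((s+1:ℕ):ℚ)
          = ((s+(n+1)).factorial:ℚ)/s.factorial := by
        rw [show s+1+n = s+(n+1) from by omega, Nat.factorial_succ s]
        have hs : ((s.factorial:ℚ)) ≠ 0 := Nat.cast_ne_zero.2 (Nat.factorial_ne_zero s)
        have hs1 : ((s:ℚ)+1) ≠ 0 := by positivity
        push_cast
        field_simp
      calc ((s+1+n).factorial:ℚ)/(s+1).factorial * ((s+1).descFactorial q) *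
            (((s+1:ℕ)):ℚ) * ∑ r ∈ range (s+1), (-1:ℚ)^r * (s.choose r) * (((n:ℚ)+1)+r)^m
          = (((s+1+n).factorial:ℚ)/((s+1).factorial) * ((s+1:ℕ):ℚ)) * ((s+1).descFactorial q) *
            ∑ r ∈ range (s+1), (-1:ℚ)^r * (s.choose r) * (((n:ℚ)+1)+r)^m := by ring
        _ = _ := by rw [hfac]
    rw [hS1, hS2]
    cases q with
    | zero =>
      have ihn := ih (n+1) 0
      push_cast at ihn
      simp only [Nat.descFactorial_zero, Nat.cast_one, mul_one] at ihn ⊢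
      rw [ihn, stirling2_succ_succ (m+1) 0, stirling2_succ_zero m]
      simp only [zero_add]
      rw [Nat.factorial_succ n]
      push_cast
      ring
    | succ q' =>
      have hdf : ∀ s : ℕ, (((s+1).descFactorial (q'+1) : ℕ) : ℚ)
          = (s.descFactorial (q'+1) : ℚ) + ((q'+1:ℕ):ℚ) * (s.descFactorial q' : ℚ) := by
        intro s
        have h2 : (s+1).descFactorial (q'+1)
            = s.descFactorial (q'+1) + (q'+1) * s.descFactorial q' := by
          rw [Nat.succ_descFactorial_succ, descFactorial_succ_eq]
        rw [h2]; push_cast; ring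
      have hsplit : ∑ s ∈ range (m+1), ((s+(n+1)).factorial:ℚ)/s.factorial *
            ((s+1).descFactorial (q'+1)) *
            ∑ r ∈ range (s+1), (-1:ℚ)^r * (s.choose r) * (((n:ℚ)+1)+r)^m
          = (∑ s ∈ range (m+1), ((s+(n+1)).factorial:ℚ)/s.factorial * (s.descFactorial (q'+1)) *
              ∑ r ∈ range (s+1), (-1:ℚ)^r * (s.choose r) * (((n:ℚ)+1)+r)^m)
            + ((q'+1:ℕ):ℚ) * ∑ s ∈ range (m+1), ((s+(n+1)).factorial:ℚ)/s.factorial *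
                (s.descFactorial q') *
                ∑ r ∈ range (s+1), (-1:ℚ)^r * (s.choose r) * (((n:ℚ)+1)+r)^m := by
        rw [Finset.mul_sum, ← Finset.sum_add_distrib]
        apply Finset.sum_congr rfl
        intro s _
        rw [hdf s]
        ring
      rw [hsplit]
      have ihA := ih (n+1) (q'+1)
      have ihB := ih (n+1) q'
      push_cast at ihA ihB
      rw [ihA, ihB]
      rw [stirling2_succ_succ (m+1) (q'+1)]
      rw [show q'+1+(n+1) = (q'+1+n)+1 from by omega]
      rw [show q'+(n+1) = q'+1+n from by omega]
      rw [Nat.factorial_succ (q'+1+n), Nat.factorial_succ q']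
      push_cast
      ring
lemma coeff_expNegQ (j : ℕ) : coeff j expNegQ = (-1:ℚ)^j / j.factorial := by
  rw [expNegQ, expQ, coeff_rescale, PowerSeries.coeff_exp]
  simp [Algebra.algebraMap_self_apply, div_eq_mul_inv]

lemma coeff_one_sub_expNegQ_zero : coeff 0 (1 - expNegQ) = 0 := by
  rw [map_sub, coeff_expNegQ, PowerSeries.coeff_one]
  norm_num

lemma coeff_one_sub_expNegQ_succ (j : ℕ) :
    coeff (j+1) (1 - expNegQ) = -((-1:ℚ)^(j+1) / (j+1).factorial) := by
  rw [map_sub, coeff_expNegQ, PowerSeries.coeff_one]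
  norm_num

/-- (C): coefficients of (1-e^{-t})^p. -/
lemma coeff_pow_one_sub_expNegQ : ∀ p j : ℕ,
    coeff j ((1 - expNegQ)^p)
      = (-1:ℚ)^(j+p) * p.factorial * stirling2 j p / j.factorial := by
  intro p
  induction p with
  | zero =>
    intro j
    rw [pow_zero, PowerSeries.coeff_one]
    cases j with
    | zero => simp [stirling2_zero_zero]
    | succ j =>
      simp [stirling2_succ_zero, Nat.factorial_ne_zero]
  | succ p ih =>
    intro j
    rw [pow_succ, PowerSeries.coeff_mul, Finset.Nat.sum_antidiagonal_eq_sum_range_succ_mk,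
      Finset.sum_range_succ]
    have hlast : coeff (j - j) (1 - expNegQ) = 0 := by
      rw [Nat.sub_self]; exact coeff_one_sub_expNegQ_zero
    rw [hlast, mul_zero, add_zero]
    have hterm : ∀ k ∈ range j, coeff k ((1 - expNegQ)^p) * coeff (j-k) (1 - expNegQ)
        = (-1:ℚ)^(j+p+1) * p.factorial * ((j.choose k : ℚ) * stirling2 k p) / j.factorial := by
      intro k hk
      have hklt : k < j := Finset.mem_range.1 hk
      obtain ⟨d, hd⟩ : ∃ d, j - k = d + 1 := ⟨j - k - 1, by omega⟩
      rw [ih k, hd, coeff_one_sub_expNegQ_succ]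
      have hsign2 : (-1:ℚ)^(j+p+1) = -((-1:ℚ)^(k+p) * (-1:ℚ)^(d+1)) := by
        rw [← pow_add, show k+p+(d+1) = j+p from by omega, pow_succ]
        ring
      have hfact : (j.choose k : ℚ) * k.factorial * (d+1).factorial = j.factorial := by
        have h5 := Nat.choose_mul_factorial_mul_factorial (Nat.le_of_lt hklt) (n := j) (k := k)
        rw [show d+1 = j - k from hd.symm]
        exact_mod_cast h5
      have hk0 : (k.factorial : ℚ) ≠ 0 := Nat.cast_ne_zero.2 (Nat.factorial_ne_zero _)
      have hd0 : ((d+1).factorial : ℚ) ≠ 0 := Nat.cast_ne_zero.2 (Nat.factorial_ne_zero _)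
      have hc0 : ((j.choose k : ℕ) : ℚ) ≠ 0 :=
        Nat.cast_ne_zero.2 (Nat.choose_pos (Nat.le_of_lt hklt)).ne'
      rw [hsign2, ← hfact]
      field_simp
    rw [Finset.sum_congr rfl hterm]
    have hccc : ∑ k ∈ range j, j.choose k * stirling2 k p = (p+1) * stirling2 j (p+1) := by
      have h1 := sum_choose_stirling2 j p
      have h3 := Finset.sum_range_succ (fun k => j.choose k * stirling2 k p) j
      rw [Nat.choose_self, one_mul, h1, stirling2_succ_succ j p] at h3
      rw [add_comm (stirling2 j p) ((p+1) * stirling2 j (p+1))] at h3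
      exact (Nat.add_right_cancel h3).symm
    have : ∑ k ∈ range j, (-1:ℚ)^(j+p+1) * p.factorial * ((j.choose k : ℚ) * stirling2 k p) / j.factorial
        = (-1:ℚ)^(j+p+1) * p.factorial * ((∑ k ∈ range j, j.choose k * stirling2 k p : ℕ) : ℚ) / j.factorial := by
      push_cast
      rw [Finset.mul_sum, Finset.sum_div]
    rw [this, hccc]
    rw [Nat.factorial_succ p]
    push_cast
    ring
noncomputable def Pser (j : ℕ) : PowerSeries ℚ :=
  PowerSeries.mk fun m => (stirling2 (m+1) (j+1) : ℚ)

lemma coeff_mul_one_sub_smul_X (f : PowerSeries ℚ) (c : ℚ) (n : ℕ) :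
    coeff n (f * (1 - c • X)) =
      coeff n f - c * coeff n (f * X) := by
  rw [mul_sub, mul_one, map_sub]
  congr 1
  rw [mul_smul_comm, map_smul, smul_eq_mul]

lemma Pser_mul_step (j : ℕ) :
    Pser (j+1) * (1 - (((j+1:ℕ):ℚ)+1) • X) = X * Pser j := by
  ext n
  rw [coeff_mul_one_sub_smul_X]
  cases n with
  | zero =>
    rw [PowerSeries.coeff_zero_mul_X, mul_zero, sub_zero]
    have h0 : coeff 0 (X * Pser j) = 0 := by
      rw [mul_comm, PowerSeries.coeff_zero_mul_X]
    rw [h0, Pser, PowerSeries.coeff_mk]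
    rw [stirling2_succ_succ 0 (j+1), stirling2_zero_succ, stirling2_zero_succ]
    norm_num
  | succ n =>
    have h1 : coeff (n+1) (X * Pser j) = coeff n (Pser j) := by
      rw [mul_comm, PowerSeries.coeff_succ_mul_X]
    rw [h1, PowerSeries.coeff_succ_mul_X, Pser, Pser, PowerSeries.coeff_mk,
      PowerSeries.coeff_mk, PowerSeries.coeff_mk]
    rw [stirling2_succ_succ (n+1) (j+1)]
    push_cast
    ring

lemma Pser_mul_prod : ∀ j : ℕ,
    Pser j * ∏ ν ∈ range (j + 1), (1 - (((ν : ℕ):ℚ) + 1) • X) = X ^ j := by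
  intro j
  induction j with
  | zero =>
    rw [Finset.prod_range_one]
    ext n
    rw [coeff_mul_one_sub_smul_X]
    cases n with
    | zero =>
      rw [PowerSeries.coeff_zero_mul_X, mul_zero, sub_zero, Pser, PowerSeries.coeff_mk]
      simp [stirling2_one 0]
    | succ n =>
      rw [PowerSeries.coeff_succ_mul_X, Pser, PowerSeries.coeff_mk, PowerSeries.coeff_mk]
      rw [stirling2_one, stirling2_one]
      simp [PowerSeries.coeff_one]
  | succ j ih =>
    rw [Finset.prod_range_succ, ← mul_assoc, mul_comm (Pser (j+1))
      (∏ ν ∈ range (j+1), (1 - (((ν : ℕ):ℚ) + 1) • X)), mul_assoc,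
      Pser_mul_step, ← mul_assoc, mul_comm _ (X : PowerSeries ℚ), mul_assoc,
      mul_comm (∏ ν ∈ range (j+1), (1 - (((ν : ℕ):ℚ) + 1) • X)) (Pser j), ih,
      ← pow_succ']

lemma constantCoeff_one_sub_smul_X (c : ℚ) :
    constantCoeff ((1 : PowerSeries ℚ) - c • X) = 1 := by
  rw [map_sub, map_one, PowerSeries.smul_eq_C_mul, map_mul, PowerSeries.constantCoeff_X,
    mul_zero, sub_zero]

lemma isUnit_prod_one_sub_smul_X (j : ℕ) :
    IsUnit (∏ ν ∈ range (j + 1), ((1 : PowerSeries ℚ) - (((ν : ℕ):ℚ) + 1) • X)) := by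
  rw [PowerSeries.isUnit_iff_constantCoeff, map_prod]
  have h : ∀ ν ∈ range (j+1), constantCoeff ((1 : PowerSeries ℚ) - (((ν : ℕ):ℚ) + 1) • X) = 1 :=
    fun ν _ => constantCoeff_one_sub_smul_X _
  rw [Finset.prod_congr rfl h, Finset.prod_const_one]
  exact isUnit_one

lemma Qser_eq_Pser (j : ℕ) : Qser j = Pser j := by
  have hu : ∀ ν : ℕ, IsUnit ((1 : PowerSeries ℚ) - (((ν : ℕ):ℚ) + 1) • X) := by
    intro ν
    rw [PowerSeries.isUnit_iff_constantCoeff, constantCoeff_one_sub_smul_X]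
    exact isUnit_one
  have hinv : (∏ ν ∈ range (j+1), Ring.inverse ((1 : PowerSeries ℚ) - (((ν : ℕ):ℚ) + 1) • X))
      * (∏ ν ∈ range (j+1), ((1 : PowerSeries ℚ) - (((ν : ℕ):ℚ) + 1) • X)) = 1 := by
    rw [← Finset.prod_mul_distrib]
    have h : ∀ ν ∈ range (j+1), Ring.inverse ((1 : PowerSeries ℚ) - (((ν : ℕ):ℚ) + 1) • X)
        * ((1 : PowerSeries ℚ) - (((ν : ℕ):ℚ) + 1) • X) = 1 := by
      intro ν _
      exact Ring.inverse_mul_cancel _ (hu ν)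
    rw [Finset.prod_congr rfl h, Finset.prod_const_one]
  have hq : Qser j * ∏ ν ∈ range (j+1), ((1 : PowerSeries ℚ) - (((ν : ℕ):ℚ) + 1) • X) = X ^ j := by
    rw [Qser, mul_assoc, hinv, mul_one]
  have hp := Pser_mul_prod j
  exact (isUnit_prod_one_sub_smul_X j).mul_right_cancel (hq.trans hp.symm)

lemma coeff_Qser (j l : ℕ) : coeff l (Qser j) = (stirling2 (l+1) (j+1) : ℚ) := by
  rw [Qser_eq_Pser, Pser, PowerSeries.coeff_mk]
lemma pb_closed (K : ℕ) (x : ℚ) (m : ℕ) :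
    pbPoly (-(K:ℤ)) x m = ∑ j ∈ range (m+1), (m.choose j : ℚ) * (-x)^(m-j) *
      ∑ p ∈ range (j+1), ((p:ℚ)+1)^K * ((-1:ℚ)^(j+p) * p.factorial * stirling2 j p) := by
  rw [pbPoly, pbEGF, mul_comm (rescale (-x) expQ) (liEGF _), PowerSeries.coeff_mul,
    Finset.Nat.sum_antidiagonal_eq_sum_range_succ_mk, Finset.mul_sum]
  apply Finset.sum_congr rfl
  intro j hj
  have hjm : j ≤ m := by have := Finset.mem_range.1 hj; omega
  rw [liEGF, PowerSeries.coeff_mk]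
  have hresc : coeff (m-j) (rescale (-x) expQ) = (-x)^(m-j) * (1 / (m-j).factorial) := by
    rw [expQ, coeff_rescale, PowerSeries.coeff_exp, Algebra.algebraMap_self_apply]
  rw [hresc]
  have hinner : ∀ p ∈ range (j+1), ((p:ℚ)+1)^(-(-(K:ℤ))) * coeff j ((1 - expNegQ)^p)
      = ((p:ℚ)+1)^K * ((-1:ℚ)^(j+p) * p.factorial * stirling2 j p) / j.factorial := by
    intro p _
    rw [neg_neg, zpow_natCast, coeff_pow_one_sub_expNegQ p j]
    ring
  rw [Finset.sum_congr rfl hinner]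
  have hfact : (m.choose j : ℚ) * j.factorial * (m-j).factorial = m.factorial := by
    exact_mod_cast Nat.choose_mul_factorial_mul_factorial hjm
  have hj0 : (j.factorial : ℚ) ≠ 0 := Nat.cast_ne_zero.2 (Nat.factorial_ne_zero _)
  have hmj0 : ((m-j).factorial : ℚ) ≠ 0 := Nat.cast_ne_zero.2 (Nat.factorial_ne_zero _)
  rw [Finset.sum_mul, Finset.mul_sum, Finset.mul_sum]
  apply Finset.sum_congr rfl
  intro p _
  rw [← hfact]
  field_simp

lemma scrB_closed (l m n : ℕ) :
    scrB l m n = ∑ j ∈ range (m+1), (m.choose j : ℚ) * (-(n:ℚ))^(m-j) *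
      ∑ p ∈ range (j+1), (-1:ℚ)^(j+p) * (stirling2 j p) * ((p:ℚ)+1)^l * ((p+n).factorial) := by
  have hasc : ∀ p : ℕ, (∑ jj ∈ range (n+1), (stirling1 n jj : ℚ) * ((p:ℚ)+1)^jj)
      = ((p+1).ascFactorial n : ℚ) := by
    intro p
    have h := stirling1_sum_pow (p+1) n
    exact_mod_cast h
  have hfa : ∀ p : ℕ, (p.factorial : ℚ) * ((p+1).ascFactorial n : ℚ) = ((p+n).factorial : ℚ) := by
    intro p
    exact_mod_cast Nat.factorial_mul_ascFactorial p n
  rw [scrB]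
  have h1 : ∀ jj ∈ range (n+1), (stirling1 n jj : ℚ) * pbPoly (-(l:ℤ) - jj) (n:ℚ) m
      = ∑ j ∈ range (m+1), ∑ p ∈ range (j+1), (stirling1 n jj : ℚ) *
          ((m.choose j : ℚ) * (-(n:ℚ))^(m-j) *
            (((p:ℚ)+1)^(l+jj) * ((-1:ℚ)^(j+p) * p.factorial * stirling2 j p))) := by
    intro jj _
    have harg : -(l:ℤ) - jj = -(((l + jj : ℕ)):ℤ) := by push_cast; ring
    rw [harg, pb_closed (l+jj) (n:ℚ) m, Finset.mul_sum]
    apply Finset.sum_congr rfl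
    intro j _
    rw [Finset.mul_sum, Finset.mul_sum]
  rw [Finset.sum_congr rfl h1, Finset.sum_comm]
  apply Finset.sum_congr rfl
  intro j _
  rw [Finset.sum_comm, Finset.mul_sum]
  apply Finset.sum_congr rfl
  intro p _
  have e : ∀ jj ∈ range (n+1), (stirling1 n jj : ℚ) *
      ((m.choose j : ℚ) * (-(n:ℚ))^(m-j) *
        (((p:ℚ)+1)^(l+jj) * ((-1:ℚ)^(j+p) * p.factorial * stirling2 j p)))
      = ((m.choose j : ℚ) * (-(n:ℚ))^(m-j) *
          (((p:ℚ)+1)^l * ((-1:ℚ)^(j+p) * p.factorial * stirling2 j p))) *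
        ((stirling1 n jj : ℚ) * ((p:ℚ)+1)^jj) := by
    intro jj _
    rw [pow_add]
    ring
  rw [Finset.sum_congr rfl e, ← Finset.mul_sum, hasc p,
    show ((p+n).factorial:ℚ) = (p.factorial:ℚ) * ((p+1).ascFactorial n : ℚ) from (hfa p).symm]
  ring

lemma neg_one_sq_pow (p : ℕ) : (-1:ℚ)^p * (-1:ℚ)^p = 1 := by
  rw [← pow_add, ← two_mul, pow_mul]
  norm_num

lemma bracket_eq (m n q : ℕ) :
    ∑ j ∈ range (m+1), (m.choose j:ℚ) * (-(n:ℚ))^(m-j) *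
      ∑ p ∈ range (j+1), (-1:ℚ)^(j+p) * (p.descFactorial q : ℚ) * (stirling2 j p) *
        ((p+n).factorial)
    = (q.factorial:ℚ) * ((q+n).factorial) * stirling2 (m+1) (q+1) := by
  have hext : ∀ j ∈ range (m+1), (m.choose j:ℚ) * (-(n:ℚ))^(m-j) *
      (∑ p ∈ range (j+1), (-1:ℚ)^(j+p) * (p.descFactorial q : ℚ) * (stirling2 j p) *
        ((p+n).factorial))
      = ∑ p ∈ range (m+1), (m.choose j:ℚ) * (-(n:ℚ))^(m-j) *
          ((-1:ℚ)^(j+p) * (p.descFactorial q : ℚ) * (stirling2 j p) * ((p+n).factorial)) := by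
    intro j hj
    rw [Finset.mul_sum]
    apply Finset.sum_subset
    · exact Finset.range_subset_range.2 (by have := Finset.mem_range.1 hj; omega)
    · intro p hp hnp
      have hlt : j < p := by
        simp only [Finset.mem_range] at hnp
        omega
      rw [stirling2_eq_zero j p hlt]
      simp
  rw [Finset.sum_congr rfl hext, Finset.sum_comm]
  have hp : ∀ p ∈ range (m+1),
      (∑ j ∈ range (m+1), (m.choose j:ℚ) * (-(n:ℚ))^(m-j) *
        ((-1:ℚ)^(j+p) * (p.descFactorial q : ℚ) * (stirling2 j p) * ((p+n).factorial)))
      = (-1:ℚ)^m * (((p+n).factorial : ℚ) / p.factorial * (p.descFactorial q) *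
          ∑ r ∈ range (p+1), (-1:ℚ)^r * (p.choose r) * ((n:ℚ) + r)^m) := by
    intro p _
    have hp0 : (p.factorial : ℚ) ≠ 0 := Nat.cast_ne_zero.2 (Nat.factorial_ne_zero _)
    have e1 : ∀ j ∈ range (m+1), (m.choose j:ℚ) * (-(n:ℚ))^(m-j) *
        ((-1:ℚ)^(j+p) * (p.descFactorial q : ℚ) * (stirling2 j p) * ((p+n).factorial))
        = ∑ r ∈ range (p+1),
            ((p.descFactorial q : ℚ) * (((p+n).factorial:ℚ) / p.factorial) *
              ((-1:ℚ)^r * (p.choose r))) *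
            ((-(r:ℚ))^j * (-(n:ℚ))^(m-j) * (m.choose j : ℚ)) := by
      intro j _
      have c1 : (m.choose j:ℚ) * (-(n:ℚ))^(m-j) *
          ((-1:ℚ)^(j+p) * (p.descFactorial q : ℚ) * (stirling2 j p) * ((p+n).factorial))
          = ((m.choose j:ℚ) * (-(n:ℚ))^(m-j) * (-1:ℚ)^(j+p) * (p.descFactorial q : ℚ) *
              (((p+n).factorial:ℚ) / p.factorial)) * ((p.factorial:ℚ) * stirling2 j p) := by
        field_simp
      rw [c1, ← alt_sum_stirling2 p j, Finset.mul_sum]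
      apply Finset.sum_congr rfl
      intro r _
      have hsig : (-1:ℚ)^(j+p) * (-1:ℚ)^(p+r) = (-1:ℚ)^j * (-1:ℚ)^r := by
        rw [pow_add, pow_add]
        linear_combination ((-1:ℚ)^j * (-1:ℚ)^r) * neg_one_sq_pow p
      have hnegp : (-(r:ℚ))^j = (-1:ℚ)^j * (r:ℚ)^j := by
        rw [neg_pow]
      calc (m.choose j:ℚ) * (-(n:ℚ))^(m-j) * (-1:ℚ)^(j+p) * (p.descFactorial q : ℚ) *
            (((p+n).factorial:ℚ) / p.factorial) * ((-1:ℚ)^(p+r) * (p.choose r) * (r:ℚ)^j)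
          = ((-1:ℚ)^(j+p) * (-1:ℚ)^(p+r)) * ((m.choose j:ℚ) * (-(n:ℚ))^(m-j) *
              (p.descFactorial q : ℚ) * (((p+n).factorial:ℚ) / p.factorial) *
              ((p.choose r) * (r:ℚ)^j)) := by ring
        _ = _ := by rw [hsig, hnegp]; ring
    rw [Finset.sum_congr rfl e1, Finset.sum_comm]
    have e2 : ∀ r ∈ range (p+1),
        ∑ j ∈ range (m+1),
          ((p.descFactorial q : ℚ) * (((p+n).factorial:ℚ) / p.factorial) *
            ((-1:ℚ)^r * (p.choose r))) *
          ((-(r:ℚ))^j * (-(n:ℚ))^(m-j) * (m.choose j : ℚ))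
        = ((p.descFactorial q : ℚ) * (((p+n).factorial:ℚ) / p.factorial) *
            ((-1:ℚ)^r * (p.choose r))) * ((-1:ℚ)^m * ((n:ℚ) + r)^m) := by
      intro r _
      rw [← Finset.mul_sum, ← add_pow (-(r:ℚ)) (-(n:ℚ)) m,
        show (-(r:ℚ) + -(n:ℚ)) = (-1) * ((n:ℚ) + r) from by ring, mul_pow]
    rw [Finset.sum_congr rfl e2, Finset.mul_sum, Finset.mul_sum]
    apply Finset.sum_congr rfl
    intro r _
    ring
  rw [Finset.sum_congr rfl hp, ← Finset.mul_sum, Lkey m n q]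
  calc (-1:ℚ)^m * ((-1:ℚ)^m * q.factorial * (q+n).factorial * stirling2 (m+1) (q+1))
      = ((-1:ℚ)^m * (-1:ℚ)^m) * (q.factorial * ((q+n).factorial : ℚ) * stirling2 (m+1) (q+1)) := by
        ring
    _ = _ := by rw [neg_one_sq_pow m]; ring

/-- ∑_{l,m} 𝓑_m^{(-l)}(n) x^l y^m = ∑_j j!(j+n)! Q_j(x)Q_j(y), stated coefficientwise;
  the sum over j truncates at min(l,m) since Q_j has order j. -/
theorem scrB_ogf (n : ℕ) (l m : ℕ) :
    scrB l m n =
      ∑ j ∈ range (min l m + 1),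
        (j.factorial : ℚ) * ((j + n).factorial : ℚ) *
          coeff l (Qser j) * coeff m (Qser j) := by
  have hpow : ∀ p : ℕ, ((p:ℚ)+1)^l
      = ∑ qq ∈ range (l+1), (stirling2 (l+1) (qq+1) : ℚ) * (p.descFactorial qq : ℚ) := by
    intro p
    exact_mod_cast congrArg (Nat.cast (R := ℚ)) (pow_eq_sum_stirling2_descFactorial l p)
  have main : scrB l m n = ∑ qq ∈ range (l+1), (stirling2 (l+1) (qq+1) : ℚ) *
      ((qq.factorial:ℚ) * ((qq+n).factorial) * stirling2 (m+1) (qq+1)) := by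
    rw [scrB_closed l m n]
    have h1 : ∀ j ∈ range (m+1), (m.choose j:ℚ) * (-(n:ℚ))^(m-j) *
        ∑ p ∈ range (j+1), (-1:ℚ)^(j+p) * (stirling2 j p) * ((p:ℚ)+1)^l * ((p+n).factorial)
        = ∑ qq ∈ range (l+1), (stirling2 (l+1) (qq+1) : ℚ) *
            ((m.choose j:ℚ) * (-(n:ℚ))^(m-j) *
              ∑ p ∈ range (j+1), (-1:ℚ)^(j+p) * (p.descFactorial qq : ℚ) * (stirling2 j p) *
                ((p+n).factorial)) := by
      intro j _
      have h2 : ∀ p ∈ range (j+1),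
          (-1:ℚ)^(j+p) * (stirling2 j p : ℚ) * ((p:ℚ)+1)^l * ((p+n).factorial)
          = ∑ qq ∈ range (l+1), (stirling2 (l+1) (qq+1) : ℚ) *
              ((-1:ℚ)^(j+p) * (p.descFactorial qq : ℚ) * (stirling2 j p : ℚ) *
                ((p+n).factorial)) := by
        intro p _
        rw [hpow p, Finset.mul_sum, Finset.sum_mul]
        apply Finset.sum_congr rfl
        intro qq _
        ring
      rw [Finset.sum_congr rfl h2]
      simp only [Finset.mul_sum]
      rw [Finset.sum_comm]
      apply Finset.sum_congr rfl
      intro qq _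
      apply Finset.sum_congr rfl
      intro p _
      ring
    rw [Finset.sum_congr rfl h1, Finset.sum_comm]
    apply Finset.sum_congr rfl
    intro qq _
    rw [← Finset.mul_sum, bracket_eq m n qq]
  rw [main]
  have hsub : range (min l m + 1) ⊆ range (l+1) := Finset.range_subset_range.2 (by omega)
  have hvan : ∀ qq ∈ range (l+1), qq ∉ range (min l m + 1) →
      (stirling2 (l+1) (qq+1) : ℚ) *
        ((qq.factorial:ℚ) * ((qq+n).factorial) * stirling2 (m+1) (qq+1)) = 0 := by
    intro qq hq hnq
    have h1 := Finset.mem_range.1 hq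
    have h2 : min l m < qq := by simp only [Finset.mem_range] at hnq; omega
    have h3 : m < qq := by omega
    rw [stirling2_eq_zero (m+1) (qq+1) (by omega)]
    simp
  rw [← Finset.sum_subset hsub hvan]
  apply Finset.sum_congr rfl
  intro j _
  rw [coeff_Qser j l, coeff_Qser j m]
  ring
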